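/- Let ∘ be a commutative associative product on a vector space (fiberwise, on tangent spaces) with structure constants c^i_{jk}, let E be invertible with inverse E^{-1}, and define the dual product by c*^i_{jk} = (E^{-1})^a c^i_{ab} c^b_{jk}. Then for any vector X and any symmetric tensor ∇E: the expression (c*^m_{jl} c*^l_{sk} − c*^m_{kl} c*^l_{sj}) X^s ∇_m E^i vanishes; consequently, if Γ* = Γ − c*·∇E, then (d_∇ − d_{∇*})(X∘) = 0 for every vector field X. -/
import Mathlib


/-- Let `∘` be a commutative associative product with structure
constants `c`, `E` invertible with inverse `E⁻¹` (as multiplication operators), and let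
the dual product be `c*^i_{jk} = (E⁻¹)^a c^i_{ab} c^b_{jk}`.  Then
`(c*^m_{jl} c*^l_{sk} − c*^m_{kl} c*^l_{sj}) X^s ∇_m E^i = 0`, and consequently with
`Γ* = Γ − c*·∇E` one has `(d_∇ − d_{∇*})(X ∘) = 0` for every vector `X`
(the derivative terms of `d_∇` and `d_{∇*}` coincide, so only the displayed algebraic
difference remains). -/
theorem statement7 (n : ℕ)
    (c : Fin n → Fin n → Fin n → ℝ)
    (hcomm : ∀ i j k, c i j k = c i k j)
    (hassoc : ∀ i j k m, (∑ l, c i j l * c l k m) = ∑ l, c i k l * c l j m)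
    (E Einv : Fin n → ℝ)
    (hInv : ∀ (X : Fin n → ℝ) (i : Fin n),
      (∑ a, ∑ b, Einv a * c i a b * (∑ p, ∑ q, c b p q * E p * X q)) = X i)
    (cstar : Fin n → Fin n → Fin n → ℝ)
    (hcstar : ∀ i j k, cstar i j k = ∑ a, ∑ b, Einv a * c i a b * c b j k)
    (N : Fin n → Fin n → ℝ)  -- `N m i` stands for `∇_m E^i`
    (Γ Γstar : Fin n → Fin n → Fin n → ℝ)
    (hΓstar : ∀ k i j, Γstar k i j = Γ k i j - ∑ s, cstar s i j * N s k)
    (X : Fin n → ℝ) :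
    (∀ i j k, (∑ m, ∑ l, ∑ s,
        (cstar m j l * cstar l s k - cstar m k l * cstar l s j) * X s * N m i) = 0) ∧
    (∀ i j k,
      (∑ l, (Γ i j l - Γstar i j l) * (∑ s, c l s k * X s))
        - (∑ l, (Γ i k l - Γstar i k l) * (∑ s, c l s j * X s)) = 0) := by

  classical
  set M : Fin n → Matrix (Fin n) (Fin n) ℝ := fun j => Matrix.of (fun i k => c i j k) with hMdef
  set A : Matrix (Fin n) (Fin n) ℝ := ∑ a, Einv a • M a with hAdef
  have hMM : ∀ j k, M j * M k = M k * M j := by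
    intro j k
    ext i m
    simp only [Matrix.mul_apply, hMdef, Matrix.of_apply]
    exact hassoc i j k m
  have hAM : ∀ j, A * M j = M j * A := by
    intro j
    rw [hAdef, Finset.sum_mul, Finset.mul_sum]
    exact Finset.sum_congr rfl fun a _ => by rw [smul_mul_assoc, mul_smul_comm, hMM]
  have hcM : ∀ i j k, cstar i j k = (A * M j) i k := by
    intro i j k
    rw [hcstar]
    simp only [Matrix.mul_apply, hAdef, Matrix.sum_apply, Matrix.smul_apply, Matrix.of_apply,
      smul_eq_mul, Finset.sum_mul, hMdef]
    try rw [Finset.sum_comm]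
    try exact Finset.sum_congr rfl fun a _ => Finset.sum_congr rfl fun b _ => by ring
  have hkey : ∀ j s l k, (∑ t, c l j t * c t s k) = ∑ t, c l k t * c t s j := by
    intro j s l k
    calc (∑ t, c l j t * c t s k) = ∑ t, c l j t * c t k s :=
          Finset.sum_congr rfl fun t _ => by rw [hcomm t s k]
      _ = ∑ t, c l k t * c t j s := hassoc l j k s
      _ = ∑ t, c l k t * c t s j := Finset.sum_congr rfl fun t _ => by rw [← hcomm t s j]
  have hPkey : ∀ (P : Matrix (Fin n) (Fin n) ℝ) (j s m k : Fin n),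
      (P * (M j * M s)) m k = (P * (M k * M s)) m j := by
    intro P j s m k
    rw [Matrix.mul_apply, Matrix.mul_apply]
    refine Finset.sum_congr rfl fun l _ => ?_
    congr 1
    show (M j * M s) l k = (M k * M s) l j
    rw [Matrix.mul_apply, Matrix.mul_apply]
    exact hkey j s l k
  have hswap : ∀ j s, (A * M j) * (A * M s) = (A * A) * (M j * M s) := by
    intro j s
    calc (A * M j) * (A * M s) = ((A * M j) * A) * M s := (Matrix.mul_assoc _ _ _).symm
      _ = (A * (M j * A)) * M s := by rw [Matrix.mul_assoc A (M j) A]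
      _ = (A * (A * M j)) * M s := by rw [← hAM]
      _ = ((A * A) * M j) * M s := by rw [← Matrix.mul_assoc]
      _ = (A * A) * (M j * M s) := Matrix.mul_assoc _ _ _
  have lemma2 : ∀ m j s k, (∑ l, cstar m j l * c l s k) = ∑ l, cstar m k l * c l s j := by
    intro m j s k
    have h1 : ∀ (j k s : Fin n), (∑ l, cstar m j l * c l s k) = ((A * M j) * M s) m k := by
      intro j k s
      rw [Matrix.mul_apply]
      exact Finset.sum_congr rfl fun l _ => by rw [hcM]; rfl
    rw [h1 j k s, h1 k j s, Matrix.mul_assoc, Matrix.mul_assoc]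
    exact hPkey A j s m k
  have lemma3 : ∀ m j s k, (∑ l, cstar m j l * cstar l s k) = ∑ l, cstar m k l * cstar l s j := by
    intro m j s k
    have h2 : ∀ (j k : Fin n), (∑ l, cstar m j l * cstar l s k) = ((A * M j) * (A * M s)) m k := by
      intro j k
      rw [Matrix.mul_apply]
      exact Finset.sum_congr rfl fun l _ => by rw [hcM, hcM]
    rw [h2 j k, h2 k j, hswap j s, hswap k s]
    exact hPkey (A * A) j s m k
  constructor
  · intro i j k
    refine Finset.sum_eq_zero fun m _ => ?_
    rw [Finset.sum_comm]
    refine Finset.sum_eq_zero fun s _ => ?_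
    rw [← Finset.sum_mul, ← Finset.sum_mul, Finset.sum_sub_distrib, lemma3 m j s k, sub_self,
      zero_mul, zero_mul]
  · intro i j k
    simp only [hΓstar, sub_sub_cancel]
    have e1 : ∀ (j k : Fin n), (∑ l, (∑ m, cstar m j l * N m i) * (∑ s, c l s k * X s))
        = ∑ m, ∑ s, (N m i * X s) * (∑ l, cstar m j l * c l s k) := by
      intro j k
      calc (∑ l, (∑ m, cstar m j l * N m i) * (∑ s, c l s k * X s))
          = ∑ l, ∑ m, ∑ s, (cstar m j l * N m i) * (c l s k * X s) :=
            Finset.sum_congr rfl fun l _ => by rw [Finset.sum_mul_sum]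
        _ = ∑ m, ∑ l, ∑ s, (cstar m j l * N m i) * (c l s k * X s) := Finset.sum_comm
        _ = ∑ m, ∑ s, ∑ l, (cstar m j l * N m i) * (c l s k * X s) :=
            Finset.sum_congr rfl fun m _ => Finset.sum_comm
        _ = ∑ m, ∑ s, (N m i * X s) * (∑ l, cstar m j l * c l s k) := by
            refine Finset.sum_congr rfl fun m _ => Finset.sum_congr rfl fun s _ => ?_
            rw [Finset.mul_sum]
            exact Finset.sum_congr rfl fun l _ => by ring
    rw [e1 j k, e1 k j, ← Finset.sum_sub_distrib]
    refine Finset.sum_eq_zero fun m _ => ?_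
    rw [← Finset.sum_sub_distrib]
    refine Finset.sum_eq_zero fun s _ => ?_
    rw [lemma2 m j s k, sub_self]
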